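/- The non-associative Lyndon-Shirshov words [u], as elements of the free associative algebra k⟨X⟩ under the commutator bracket, are linearly independent over the field k. -/

import Mathlib

open List

/-- The lexicographic order used by Shirshov: a word is *greater* than any of its
proper extensions (`w > w ++ t` for `t ≠ []`), and otherwise words are compared
letterwise by the order on the alphabet.  `LSLt u v` means `u < v`. -/
def LSLt {X : Type*} [LinearOrder X] : List X → List X → Prop
  | _ :: _, [] => True
  | [], _ => False
  | a :: u, b :: v => a < b ∨ (a = b ∧ LSLt u v)

/-- `u ≤ v` in the Shirshov lexicographic order. -/
def LSLe {X : Type*} [LinearOrder X] (u v : List X) : Prop := u = v ∨ LSLt u v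

/-- The degree-lexicographic order: compare first by length, then lexicographically. -/
def DegLt {X : Type*} [LinearOrder X] (u v : List X) : Prop :=
  u.length < v.length ∨ (u.length = v.length ∧ LSLt u v)

/-- `≤` in the degree-lexicographic order. -/
def DegLe {X : Type*} [LinearOrder X] (u v : List X) : Prop := u = v ∨ DegLt u v

/-- An associative Lyndon–Shirshov word: a nonempty word `u` such that `vw > wv`
(lexicographically) for every factorization `u = vw` into nonempty parts. -/
def IsALSW {X : Type*} [LinearOrder X] (u : List X) : Prop :=
  u ≠ [] ∧ ∀ v w : List X, v ≠ [] → w ≠ [] → u = v ++ w → LSLt (w ++ v) (v ++ w)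

/-- The underlying associative word of a non-associative word (binary bracketing). -/
def wordOf {X : Type*} : FreeMagma X → List X
  | .of x => [x]
  | .mul a b => wordOf a ++ wordOf b

/-- `w` is the longest proper suffix of `u` which is an ALSW. -/
def LongestALSWProperSuffix {X : Type*} [LinearOrder X] (u w : List X) : Prop :=
  IsALSW w ∧ (∃ v : List X, v ≠ [] ∧ u = v ++ w) ∧
    ∀ w' : List X, IsALSW w' → (∃ v' : List X, v' ≠ [] ∧ u = v' ++ w') →
      w'.length ≤ w.length

/-- The standard (up-to-down) bracketing of an ALSW: `[x] = x` and
`[u] = [[v][w]]` where `w` is the longest proper ALSW suffix of `u`. -/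
inductive IsStdBracketing {X : Type*} [LinearOrder X] : List X → FreeMagma X → Prop
  | of (x : X) : IsStdBracketing [x] (.of x)
  | mul {v w : List X} {tv tw : FreeMagma X} :
      IsALSW (v ++ w) → LongestALSWProperSuffix (v ++ w) w →
      IsStdBracketing v tv → IsStdBracketing w tw →
      IsStdBracketing (v ++ w) (tv * tw)

/-- A non-associative Lyndon–Shirshov word, via Shirshov's conditions:
the underlying word is an ALSW, both halves are NLSWs, and the right factor of
the left half is `≤` the right half. -/
inductive IsNLSW {X : Type*} [LinearOrder X] : FreeMagma X → Prop
  | of (x : X) : IsNLSW (.of x)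
  | mul {tv tw : FreeMagma X} :
      IsNLSW tv → IsNLSW tw → IsALSW (wordOf (tv * tw)) →
      (∀ t₁ t₂ : FreeMagma X, tv = t₁ * t₂ → LSLe (wordOf t₂) (wordOf tw)) →
      IsNLSW (tv * tw)

/-- The free associative algebra `k⟨X⟩`, realized as the monoid algebra of the
free monoid on `X`. -/
abbrev FreeAssocAlg (k X : Type*) [Field k] := MonoidAlgebra k (FreeMonoid X)

/-- The monomial of `k⟨X⟩` corresponding to a word `u ∈ X*`. -/
noncomputable def monom (k : Type*) [Field k] {X : Type*} (u : List X) : FreeAssocAlg k X :=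
  MonoidAlgebra.single (FreeMonoid.ofList u) 1

/-- The coefficient of the word `u` in `f ∈ k⟨X⟩`. -/
def coeffW {k X : Type*} [Field k] (f : FreeAssocAlg k X) (u : List X) : k :=
  f.coeff (FreeMonoid.ofList u)

/-- `u` is the leading word of `f` with respect to the deg-lex order. -/
def IsLeadingWord {k X : Type*} [Field k] [LinearOrder X]
    (f : FreeAssocAlg k X) (u : List X) : Prop :=
  coeffW f u ≠ 0 ∧ ∀ w : List X, coeffW f w ≠ 0 → w = u ∨ DegLt w u

/-- `f` is monic: its leading coefficient is `1`. -/
def IsMonic {k X : Type*} [Field k] [LinearOrder X] (f : FreeAssocAlg k X) : Prop :=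
  ∃ u : List X, IsLeadingWord f u ∧ coeffW f u = 1

/-- The generator `x ∈ X` inside `k⟨X⟩`. -/
noncomputable def gen (k : Type*) [Field k] {X : Type*} (x : X) : FreeAssocAlg k X :=
  monom k [x]

attribute [local instance 100] LieRing.ofAssociativeRing

/-- The free Lie algebra `Lie(X)`: the Lie subalgebra of `k⟨X⟩` generated by `X`
under the commutator bracket. -/
noncomputable def LieX (k X : Type*) [Field k] : LieSubalgebra k (FreeAssocAlg k X) :=
  LieSubalgebra.lieSpan k _ (Set.range (gen k (X := X)))

/-- Evaluation of a non-associative word in `k⟨X⟩`, interpreting the binary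
operation as the commutator `(ab) = ab - ba`. -/
noncomputable def evalC {k X : Type*} [Field k] : FreeMagma X → FreeAssocAlg k X
  | .of x => gen k x
  | .mul a b => evalC a * evalC b - evalC b * evalC a

section AuxLemmas

variable {X : Type*} [LinearOrder X]

theorem lslt_iff_lex : ∀ {u v : List X}, u.length = v.length →
    (LSLt u v ↔ List.Lex (· < ·) u v) := by
  intro u
  induction u with
  | nil =>
    intro v h
    have : v = [] := by
      cases v with
      | nil => rfl
      | cons b v => simp at h
    subst this
    simp only [LSLt]
    exact ⟨fun h => h.elim, fun h => by cases h⟩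
  | cons a u ih =>
    intro v h
    cases v with
    | nil => simp at h
    | cons b v =>
      simp only [List.length_cons, Nat.add_right_cancel_iff] at h
      show (a < b ∨ (a = b ∧ LSLt u v)) ↔ _
      constructor
      · rintro (hab | ⟨rfl, huv⟩)
        · exact List.Lex.rel hab
        · exact List.Lex.cons ((ih h).1 huv)
      · intro hl
        cases hl with
        | rel hab => exact Or.inl hab
        | cons hl => exact Or.inr ⟨rfl, (ih h).2 hl⟩

theorem lex_append_right_len : ∀ {a c : List X}, a.length = c.length →
    List.Lex (· < ·) a c → ∀ (b d : List X), List.Lex (· < ·) (a ++ b) (c ++ d) := by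
  intro a
  induction a with
  | nil =>
    intro c h hl
    have : c = [] := by cases c with
      | nil => rfl
      | cons y c => simp at h
    subst this; cases hl
  | cons x a ih =>
    intro c h hl b d
    cases c with
    | nil => simp at h
    | cons y c =>
      simp only [List.length_cons, Nat.add_right_cancel_iff] at h
      cases hl with
      | rel hxy => exact List.Lex.rel hxy
      | cons hl => exact List.Lex.cons (ih h hl b d)

theorem lex_append_left : ∀ (a : List X) {b d : List X},
    List.Lex (· < ·) b d → List.Lex (· < ·) (a ++ b) (a ++ d) := by
  intro a
  induction a with
  | nil => intro b d h; exact h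
  | cons x a ih => intro b d h; exact List.Lex.cons (ih h)

theorem list_lt_iff_lex {a b : List X} : a < b ↔ List.Lex (· < ·) a b := Iff.rfl

end AuxLemmas

section CoeffLemmas

variable {k X : Type*} [Field k] [LinearOrder X]

omit [LinearOrder X] in
theorem coeffW_sub (f g : FreeAssocAlg k X) (m : List X) :
    coeffW (f - g) m = coeffW f m - coeffW g m := by
  rw [coeffW, MonoidAlgebra.coeff_sub, Finsupp.sub_apply]; rfl

omit [LinearOrder X] in
theorem coeffW_mul_of_homog (f g : FreeAssocAlg k X) (a b : List X)
    (hf : ∀ m : List X, coeffW f m ≠ 0 → m.length = a.length) :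
    coeffW (f * g) (a ++ b) = coeffW f a * coeffW g b := by
  classical
  show (f * g).coeff (FreeMonoid.ofList (a ++ b)) = _
  rw [MonoidAlgebra.coeff_mul]
  simp only [Finsupp.sum]
  rw [Finset.sum_eq_single (FreeMonoid.ofList a)]
  · rw [Finset.sum_eq_single (FreeMonoid.ofList b)]
    · rw [if_pos (show FreeMonoid.ofList a * FreeMonoid.ofList b = FreeMonoid.ofList (a ++ b) from rfl)]; rfl
    · intro y _ hyb
      rw [if_neg]
      intro hcon
      apply hyb
      have : FreeMonoid.toList ((FreeMonoid.ofList a) * y) = a ++ b :=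
        congrArg FreeMonoid.toList hcon
      rw [FreeMonoid.toList_mul, FreeMonoid.toList_ofList] at this
      have := (List.append_inj this rfl).2
      exact congrArg FreeMonoid.ofList this ▸ rfl
    · intro hb
      have hgb : g.coeff (FreeMonoid.ofList b) = 0 := Finsupp.notMem_support_iff.1 hb
      simp [hgb]
  · intro x hx hxa
    apply Finset.sum_eq_zero
    intro y _
    rw [if_neg]
    intro hcon
    apply hxa
    have hlen : (FreeMonoid.toList x).length = a.length :=
      hf (FreeMonoid.toList x) (Finsupp.mem_support_iff.1 hx)
    have : FreeMonoid.toList x ++ FreeMonoid.toList y = a ++ b := by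
      have := congrArg FreeMonoid.toList hcon
      rwa [FreeMonoid.toList_mul, FreeMonoid.toList_ofList] at this
    have := (List.append_inj this hlen).1
    exact congrArg FreeMonoid.ofList this ▸ rfl
  · intro ha
    have hfa : f.coeff (FreeMonoid.ofList a) = 0 := Finsupp.notMem_support_iff.1 ha
    simp [hfa, coeffW]

omit [LinearOrder X] in
theorem coeffW_mul_support {f g : FreeAssocAlg k X} {m : List X}
    (h : coeffW (f * g) m ≠ 0) :
    ∃ x y : List X, m = x ++ y ∧ coeffW f x ≠ 0 ∧ coeffW g y ≠ 0 := by
  classical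
  have hm : FreeMonoid.ofList m ∈ (f * g).coeff.support := Finsupp.mem_support_iff.2 h
  have hsub := MonoidAlgebra.support_coeff_mul_subset f g hm
  rw [Finset.mem_mul] at hsub
  obtain ⟨x, hx, y, hy, hxy⟩ := hsub
  refine ⟨FreeMonoid.toList x, FreeMonoid.toList y, ?_, ?_, ?_⟩
  · have := congrArg FreeMonoid.toList hxy
    rw [FreeMonoid.toList_mul] at this
    exact this.symm
  · exact Finsupp.mem_support_iff.1 hx
  · exact Finsupp.mem_support_iff.1 hy

end CoeffLemmas

section Lead

variable {k X : Type*} [Field k] [LinearOrder X]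

/-- `f` has leading word `u` with coefficient 1, and is homogeneous of degree `u.length`. -/
def Lead (f : FreeAssocAlg k X) (u : List X) : Prop :=
  coeffW f u = 1 ∧ ∀ m : List X, coeffW f m ≠ 0 →
    m.length = u.length ∧ (m = u ∨ List.Lex (· < ·) m u)

theorem Lead.mul {f g : FreeAssocAlg k X} {u v : List X}
    (hf : Lead f u) (hg : Lead g v) : Lead (f * g) (u ++ v) := by
  constructor
  · rw [coeffW_mul_of_homog f g u v (fun m hm => (hf.2 m hm).1), hf.1, hg.1, one_mul]
  · intro m hm
    obtain ⟨x, y, rfl, hx, hy⟩ := coeffW_mul_support hm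
    obtain ⟨hxl, hxlex⟩ := hf.2 x hx
    obtain ⟨hyl, hylex⟩ := hg.2 y hy
    refine ⟨by simp [hxl, hyl], ?_⟩
    rcases hxlex with rfl | hxlt
    · rcases hylex with rfl | hylt
      · exact Or.inl rfl
      · exact Or.inr (lex_append_left x hylt)
    · exact Or.inr (lex_append_right_len hxl hxlt y v)

theorem lead_evalC {u : List X} {t : FreeMagma X} (h : IsStdBracketing u t) :
    Lead (evalC (k := k) t) u := by
  induction h with
  | of x =>
    constructor
    · show (MonoidAlgebra.single (FreeMonoid.ofList [x]) (1 : k)).coeff (FreeMonoid.ofList [x]) = 1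
      simp
    · intro m hm
      have : FreeMonoid.ofList [x] = FreeMonoid.ofList m := by
        by_contra hne
        apply hm
        show (MonoidAlgebra.single (FreeMonoid.ofList [x]) (1 : k)).coeff (FreeMonoid.ofList m) = 0
        classical
        rw [MonoidAlgebra.coeff_single, Finsupp.single_apply, if_neg hne]
      have hmx : m = [x] := (congrArg FreeMonoid.toList this).symm
      exact ⟨by rw [hmx], Or.inl hmx⟩
  | @mul v w tv tw hals hsuf hv hw ihv ihw =>
    -- nonemptiness of v and w
    have hwne : w ≠ [] := hsuf.1.1
    have hvne : v ≠ [] := by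
      obtain ⟨v₀, hv₀, he⟩ := hsuf.2.1
      rw [List.append_cancel_right he]; exact hv₀
    have hlen : (w ++ v).length = (v ++ w).length := by
      simp [Nat.add_comm]
    have hkey : List.Lex (· < ·) (w ++ v) (v ++ w) :=
      (lslt_iff_lex hlen).1 (hals.2 v w hvne hwne rfl)
    have hvw := Lead.mul (ihv) (ihw)
    have hwv := Lead.mul (ihw) (ihv)
    have hwv0 : coeffW (evalC (k := k) tw * evalC tv) (v ++ w) = 0 := by
      by_contra h0
      obtain ⟨_, hc⟩ := hwv.2 _ h0
      rcases hc with he | hlt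
      · rw [he] at hkey
        exact lt_irrefl _ (list_lt_iff_lex.2 hkey)
      · exact lt_asymm (list_lt_iff_lex.2 hkey) (list_lt_iff_lex.2 hlt)
    constructor
    · show coeffW (evalC (k := k) tv * evalC tw - evalC tw * evalC tv) (v ++ w) = 1
      rw [coeffW_sub, hwv0, hvw.1, sub_zero]
    · intro m hm
      rw [show evalC (k := k) (tv * tw) =
          evalC tv * evalC tw - evalC tw * evalC tv from rfl, coeffW_sub] at hm
      have : coeffW (evalC (k := k) tv * evalC tw) m ≠ 0 ∨
          coeffW (evalC (k := k) tw * evalC tv) m ≠ 0 := by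
        by_contra hc
        push_neg at hc
        rw [hc.1, hc.2, sub_zero] at hm
        exact hm rfl
      rcases this with h1 | h2
      · exact hvw.2 m h1
      · obtain ⟨hml, hc⟩ := hwv.2 m h2
        refine ⟨by rw [hml]; exact hlen, Or.inr ?_⟩
        rcases hc with rfl | hlt
        · exact hkey
        · exact list_lt_iff_lex.1
            (lt_trans (list_lt_iff_lex.2 hlt) (list_lt_iff_lex.2 hkey))

end Lead

section Unique

variable {X : Type*} [LinearOrder X]

theorem std_inv {u : List X} {t : FreeMagma X} (h : IsStdBracketing u t) :
    (∃ x, u = [x] ∧ t = .of x) ∨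
    (∃ v w tv tw, u = v ++ w ∧ t = tv * tw ∧ IsALSW (v ++ w) ∧
      LongestALSWProperSuffix (v ++ w) w ∧ IsStdBracketing v tv ∧ IsStdBracketing w tw) := by
  cases h with
  | of x => exact Or.inl ⟨x, rfl, rfl⟩
  | @mul v w tv tw h1 h2 h3 h4 => exact Or.inr ⟨v, w, tv, tw, rfl, rfl, h1, h2, h3, h4⟩

theorem suffix_ne_nil {X : Type*} [LinearOrder X] {u w : List X}
    (h : LongestALSWProperSuffix u w) : w ≠ [] := h.1.1

theorem prefix_ne_nil {v w : List X} (h : LongestALSWProperSuffix (v ++ w) w) : v ≠ [] := by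
  obtain ⟨v₀, hv₀, he⟩ := h.2.1
  rw [List.append_cancel_right he]; exact hv₀

omit [LinearOrder X] in
theorem not_single {v w : List X} (hv : v ≠ []) (hw : w ≠ []) (x : X) :
    v ++ w ≠ [x] := by
  intro h
  have := congrArg List.length h
  simp only [List.length_append, List.length_cons, List.length_nil] at this
  cases v with
  | nil => exact hv rfl
  | cons a v =>
    cases w with
    | nil => exact hw rfl
    | cons b w => simp at this; omega

theorem std_unique {u : List X} {t : FreeMagma X} (h : IsStdBracketing u t) :
    ∀ t' : FreeMagma X, IsStdBracketing u t' → t = t' := by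
  induction h with
  | of x =>
    intro t' h'
    rcases std_inv h' with ⟨y, hy, rfl⟩ | ⟨v', w', tv', tw', he, rfl, hals', hsuf', hv', hw'⟩
    · rw [show y = x from by injection hy.symm]
    · exact absurd he.symm (not_single (prefix_ne_nil hsuf') (suffix_ne_nil hsuf') x)
  | @mul v w tv tw hals hsuf hv hw ihv ihw =>
    intro t' h'
    rcases std_inv h' with ⟨y, hy, rfl⟩ | ⟨v', w', tv', tw', he, rfl, hals', hsuf', hv', hw'⟩
    · exact absurd hy (not_single (prefix_ne_nil hsuf) (suffix_ne_nil hsuf) y)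
    · -- he : v ++ w = v' ++ w'
      have hsuf'' : LongestALSWProperSuffix (v ++ w) w' := he ▸ hsuf'
      have h1 : w'.length ≤ w.length :=
        hsuf.2.2 w' hsuf''.1 ⟨v', prefix_ne_nil hsuf', he⟩
      have h2 : w.length ≤ w'.length :=
        hsuf''.2.2 w hsuf.1 ⟨v, prefix_ne_nil hsuf, rfl⟩
      have hlenv : v.length = v'.length := by
        have := congrArg List.length he
        simp only [List.length_append] at this
        omega
      obtain ⟨rfl, rfl⟩ := List.append_inj he hlenv
      rw [ihv tv' hv', ihw tw' hw']

end Unique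

/-- The non-associative Lyndon–Shirshov words, as elements of
`k⟨X⟩` under the commutator bracket, are linearly independent over `k`. -/
theorem nlsw_linearIndependent {k X : Type*} [Field k] [LinearOrder X] :
    LinearIndependent k
      (fun t : {t : FreeMagma X // IsStdBracketing (wordOf t) t} =>
        evalC (k := k) t.val) := by
  classical
  rw [linearIndependent_iff']
  have hinj : ∀ t t' : {t : FreeMagma X // IsStdBracketing (wordOf t) t},
      wordOf t.val = wordOf t'.val → t = t' := by
    intro t t' h
    exact Subtype.ext (std_unique t.2 t'.val (by rw [h]; exact t'.2))
  suffices H : ∀ (n : ℕ) (s : Finset {t : FreeMagma X // IsStdBracketing (wordOf t) t})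
      (g : {t : FreeMagma X // IsStdBracketing (wordOf t) t} → k), s.card ≤ n →
      (∑ i ∈ s, g i • evalC (k := k) i.val) = 0 → ∀ i ∈ s, g i = 0 by
    intro s g hs i hi
    exact H s.card s g le_rfl hs i hi
  intro n
  induction n with
  | zero =>
    intro s g hc _ i hi
    rw [Nat.le_zero, Finset.card_eq_zero] at hc
    subst hc
    exact absurd hi (Finset.notMem_empty i)
  | succ n ih =>
    intro s g hc hsum i hi
    obtain ⟨t₀, ht₀s, hmax⟩ := Finset.exists_max_image s
      (fun t => toLex ((wordOf t.val).length, wordOf t.val)) ⟨i, hi⟩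
    have hzero : ∀ t ∈ s, t ≠ t₀ →
        g t * coeffW (evalC (k := k) t.val) (wordOf t₀.val) = 0 := by
      intro t _hts hne
      have hc0 : coeffW (evalC (k := k) t.val) (wordOf t₀.val) = 0 := by
        by_contra h0
        obtain ⟨hml, hml2⟩ := (lead_evalC (k := k) t.2).2 _ h0
        rcases hml2 with he | hlt
        · exact hne (hinj t t₀ he.symm)
        · have hlt2 : toLex ((wordOf t₀.val).length, wordOf t₀.val) <
              toLex ((wordOf t.val).length, wordOf t.val) :=
            Prod.Lex.lt_iff.2 (Or.inr ⟨hml, list_lt_iff_lex.2 hlt⟩)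
          exact absurd (hmax t _hts) (not_le.2 hlt2)
      rw [hc0, mul_zero]
    have h0 : g t₀ = 0 := by
      have hap : coeffW (∑ t ∈ s, g t • evalC (k := k) t.val) (wordOf t₀.val) = 0 := by
        rw [hsum, coeffW, MonoidAlgebra.coeff_zero]; rfl
      rw [show coeffW (∑ t ∈ s, g t • evalC (k := k) t.val) (wordOf t₀.val)
            = ∑ t ∈ s, g t * coeffW (evalC (k := k) t.val) (wordOf t₀.val) from by
          rw [coeffW, MonoidAlgebra.coeff_sum, Finsupp.finset_sum_apply]
          exact Finset.sum_congr rfl fun t _ => by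
            rw [MonoidAlgebra.coeff_smul, Finsupp.smul_apply, smul_eq_mul]; rfl] at hap
      rw [Finset.sum_eq_single t₀ hzero (fun h => absurd ht₀s h)] at hap
      rw [(lead_evalC (k := k) t₀.2).1, mul_one] at hap
      exact hap
    have hsum' : ∑ t ∈ s.erase t₀, g t • evalC (k := k) t.val = 0 := by
      have := Finset.sum_erase_add s (fun t => g t • evalC (k := k) t.val) ht₀s
      simp only [h0, zero_smul, add_zero] at this
      rw [this]; exact hsum
    have hcard : (s.erase t₀).card ≤ n := by
      rw [Finset.card_erase_of_mem ht₀s]; omega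
    rcases eq_or_ne i t₀ with rfl | hne2
    · exact h0
    · exact ih (s.erase t₀) g hcard hsum' i (Finset.mem_erase.2 ⟨hne2, hi⟩)
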